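/- Every subgroup of S₆ of index 6 is isomorphic to S₅. -/

import Mathlib

open Equiv Equiv.Perm Subgroup

section Aux

variable {α : Type*}

/-- `Perm` congruence as a `MulEquiv`. -/
noncomputable def permMulCongr {β : Type*} (e : α ≃ β) : Perm α ≃* Perm β :=
  { Equiv.permCongr e with
    map_mul' := fun p q => by ext x; simp }

/-- The stabilizer of a point in the full permutation group is the permutation
group of the complement. -/
noncomputable def stabMulEquiv [DecidableEq α] (a : α) :
    MulAction.stabilizer (Perm α) a ≃* Perm {b : α // b ≠ a} where
  toFun σ := σ.1.subtypePerm (fun b => by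
    have hσa : σ.1 a = a := σ.2
    constructor
    · intro hb hc
      exact hb (by rw [hc, hσa])
    · intro hb hc
      exact hb (σ.1.injective (hc.trans hσa.symm)))
  invFun τ := ⟨Equiv.Perm.ofSubtype τ, by
    have : Equiv.Perm.ofSubtype τ a = a :=
      Equiv.Perm.ofSubtype_apply_of_not_mem τ (not_not_intro rfl)
    simpa [MulAction.mem_stabilizer_iff, Equiv.Perm.smul_def] using this⟩
  left_inv σ := by
    apply Subtype.ext
    apply Equiv.Perm.ofSubtype_subtypePerm
    intro x hx hxa
    exact hx (by rw [hxa]; exact σ.2)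
  right_inv τ := by
    ext ⟨b, hb⟩
    simp [Equiv.Perm.subtypePerm_apply, Equiv.Perm.ofSubtype_apply_of_mem τ hb]
  map_mul' σ τ := by
    ext ⟨b, hb⟩
    simp [Equiv.Perm.subtypePerm_apply]; rfl

lemma exists_ne_four (a b c d : Fin 6) : ∃ e : Fin 6, e ≠ a ∧ e ≠ b ∧ e ≠ c ∧ e ≠ d := by
  by_contra h
  push_neg at h
  have hsub : (Finset.univ : Finset (Fin 6)) ⊆ {a, b, c, d} := by
    intro x _
    rcases eq_or_ne x a with h1 | h1; · simp [h1]
    rcases eq_or_ne x b with h2 | h2; · simp [h2]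
    rcases eq_or_ne x c with h3 | h3; · simp [h3]
    simp [h x h1 h2 h3]
  have := Finset.card_le_card hsub
  have h4 : ({a, b, c, d} : Finset (Fin 6)).card ≤ 4 := by
    apply le_trans (Finset.card_insert_le _ _)
    apply Nat.succ_le_succ
    apply le_trans (Finset.card_insert_le _ _)
    apply Nat.succ_le_succ
    apply le_trans (Finset.card_insert_le _ _)
    apply Nat.succ_le_succ
    simp [Finset.card_singleton]
  simp [Finset.card_univ] at this
  omega

variable [DecidableEq α]

lemma comm_mem {G : Type*} [Group G] (N : Subgroup G) [hN : N.Normal] {σ : G} (hσ : σ ∈ N)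
    (τ : G) : σ * (τ * σ⁻¹ * τ⁻¹) ∈ N :=
  mul_mem hσ (hN.conj_mem σ⁻¹ (inv_mem hσ) τ)

lemma comm_swap_eq (σ : Perm α) (x y : α) :
    σ * (swap x y * σ⁻¹ * (swap x y)⁻¹) = swap (σ x) (σ y) * swap x y := by
  rw [Equiv.swap_apply_apply, Equiv.swap_inv]
  group

variable [Fintype α]

/-- If a normal subgroup contains a permutation moving `x` but fixing `e ≠ x`,
it contains a three-cycle. -/
lemma three_cycle_of_fixed_point (N : Subgroup (Perm α)) [N.Normal] {σ : Perm α}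
    (hσ : σ ∈ N) {x e : α} (hx : σ x ≠ x) (he : σ e = e) (hex : e ≠ x) :
    ∃ c ∈ N, IsThreeCycle c := by
  refine ⟨σ * (swap x e * σ⁻¹ * (swap x e)⁻¹), comm_mem N hσ _, ?_⟩
  rw [comm_swap_eq, he, Equiv.swap_comm x e, Equiv.swap_comm (σ x) e]
  have hesx : e ≠ σ x := by
    intro h
    exact hex (σ.injective (he.trans h))
  exact isThreeCycle_swap_mul_swap_same hesx hex hx

lemma three_cycle_of_nontrivial (N : Subgroup (Perm (Fin 6))) [N.Normal] {σ : Perm (Fin 6)}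
    (hσ : σ ∈ N) (hσ1 : σ ≠ 1) : ∃ c ∈ N, IsThreeCycle c := by
  by_cases h2 : ∃ x, σ (σ x) ≠ x
  · -- non-involution case
    obtain ⟨x, hx⟩ := h2
    refine ⟨σ * (swap x (σ x) * σ⁻¹ * (swap x (σ x))⁻¹), comm_mem N hσ _, ?_⟩
    rw [comm_swap_eq]
    have hx1 : σ x ≠ x := fun h => hx (by rw [h, h])
    rw [Equiv.swap_comm x (σ x)]
    exact isThreeCycle_swap_mul_swap_same (fun h => hx1 (σ.injective h).symm)
      hx1 (fun h => hx h)
  · push_neg at h2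
    obtain ⟨x, hx⟩ : ∃ x, σ x ≠ x := by
      by_contra h
      push_neg at h
      exact hσ1 (Equiv.ext h)
    by_cases hfix : ∃ e, σ e = e
    · obtain ⟨e, he⟩ := hfix
      exact three_cycle_of_fixed_point N hσ hx he (fun h => hx (by rw [← h, he]))
    · push_neg at hfix
      -- fixed-point-free involution
      set b := σ x with hb
      obtain ⟨c, hca, hcb, -, -⟩ := exists_ne_four x b x b
      set d := σ c with hd
      have hdc : d ≠ c := fun h => hfix c (by rw [← hd, h])
      have hbx : b ≠ x := hx
      have hdx : d ≠ x := by
        intro h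
        apply hcb
        have h' : σ d = σ x := congrArg σ h
        rw [hd, h2] at h'
        exact h'.trans hb.symm
      have hdb : d ≠ b := by
        intro h
        apply hca
        have h' : σ c = σ x := by rw [← hd, h, hb]
        exact σ.injective h'

      set π := σ * (swap x c * σ⁻¹ * (swap x c)⁻¹) with hπ
      have hπN : π ∈ N := comm_mem N hσ _
      have hπeq : π = swap b d * swap x c := by rw [hπ, comm_swap_eq, ← hb, ← hd]
      obtain ⟨e, hea, heb, hec, hed⟩ := exists_ne_four x b c d
      have hπe : π e = e := by
        rw [hπeq]
        simp [Equiv.swap_apply_of_ne_of_ne hea hec, Equiv.swap_apply_of_ne_of_ne heb hed]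
      have hπx : π x ≠ x := by
        rw [hπeq]
        simp only [Equiv.Perm.mul_apply, Equiv.swap_apply_left,
          Equiv.swap_apply_of_ne_of_ne hcb hdc.symm]
        exact hca
      exact three_cycle_of_fixed_point N hπN hπx hπe hea

end Aux

lemma alternating_le_of_normal_ne_bot (N : Subgroup (Perm (Fin 6))) [hN : N.Normal]
    (h : N ≠ ⊥) : alternatingGroup (Fin 6) ≤ N := by
  obtain ⟨σ, hσN, hσ1⟩ : ∃ σ ∈ N, σ ≠ 1 := by
    by_contra hc
    push_neg at hc
    exact h (Subgroup.eq_bot_iff_forall N |>.mpr hc)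
  obtain ⟨c, hcN, hc3⟩ := three_cycle_of_nontrivial N hσN hσ1
  have h5 : 5 ≤ Nat.card (Fin 6) := by simp
  have hctop := hc3.alternating_normalClosure h5
  haveI : (N.subgroupOf (alternatingGroup (Fin 6))).Normal := hN.subgroupOf _
  have hle : Subgroup.normalClosure
      ({(⟨c, hc3.mem_alternatingGroup⟩ : alternatingGroup (Fin 6))} :
        Set (alternatingGroup (Fin 6))) ≤ N.subgroupOf (alternatingGroup (Fin 6)) := by
    apply Subgroup.normalClosure_le_normal
    rw [Set.singleton_subset_iff, SetLike.mem_coe, Subgroup.mem_subgroupOf]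
    exact hcN
  rw [hctop] at hle
  exact Subgroup.subgroupOf_eq_top.mp (top_le_iff.mp hle)

lemma alternating_index_two : (alternatingGroup (Fin 6)).index = 2 := by
  have h1 : 2 * Fintype.card (alternatingGroup (Fin 6)) = Fintype.card (Perm (Fin 6)) :=
    two_mul_card_alternatingGroup
  have h2 : Fintype.card (Perm (Fin 6)) = 720 := by
    rw [Fintype.card_perm, Fintype.card_fin]
    norm_num [Nat.factorial]
  have h3 := Subgroup.card_mul_index (alternatingGroup (Fin 6))
  rw [Nat.card_eq_fintype_card, Nat.card_eq_fintype_card] at h3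
  have h4 : Fintype.card (alternatingGroup (Fin 6)) = 360 := by omega
  rw [h4, h2] at h3
  omega

/-- Every subgroup of `S₆` of index 6 is isomorphic to `S₅`. -/
theorem S6_subgroup_index_6_iso_S5 (H : Subgroup (Equiv.Perm (Fin 6)))
    (hH : H.index = 6) :
    Nonempty (H ≃* Equiv.Perm (Fin 5)) := by
  classical
  set G := Equiv.Perm (Fin 6) with hG
  let φ := MulAction.toPermHom G (G ⧸ H)
  have hker : φ.ker = ⊥ := by
    rw [← Subgroup.normalCore_eq_ker]
    by_contra hne
    have hA := alternating_le_of_normal_ne_bot _ hne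
    have hAH : alternatingGroup (Fin 6) ≤ H := hA.trans (Subgroup.normalCore_le H)
    have hdvd := Subgroup.index_dvd_of_le hAH
    rw [hH, alternating_index_two] at hdvd
    norm_num at hdvd
  have hinj : Function.Injective φ := (MonoidHom.ker_eq_bot_iff φ).mp hker
  haveI : Fintype (G ⧸ H) := Fintype.ofFinite _
  have hcard6 : Fintype.card (G ⧸ H) = 6 := by
    rw [← Nat.card_eq_fintype_card, ← Subgroup.index_eq_card, hH]
  have hbij : Function.Bijective φ := by
    rw [Fintype.bijective_iff_injective_and_card]
    refine ⟨hinj, ?_⟩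
    have h1 : Fintype.card (Perm (G ⧸ H)) = 720 := by
      rw [Fintype.card_perm, hcard6]
      norm_num [Nat.factorial]
    rw [h1, Fintype.card_perm, Fintype.card_fin]
    norm_num [Nat.factorial]
  let e : G ≃* Perm (G ⧸ H) := MulEquiv.ofBijective φ hbij
  set q₀ : G ⧸ H := ((1 : G) : G ⧸ H) with hq₀
  have hstab : ∀ g : G, g ∈ H ↔ g • q₀ = q₀ := fun g =>
    ((SetLike.ext_iff.mp (MulAction.stabilizer_quotient H) g).symm).trans
      MulAction.mem_stabilizer_iff
  have hmap : Subgroup.map (e : G →* Perm (G ⧸ H)) H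
      = MulAction.stabilizer (Perm (G ⧸ H)) q₀ := by
    ext x
    simp only [Subgroup.mem_map, MulAction.mem_stabilizer_iff]
    constructor
    · rintro ⟨g, hg, rfl⟩
      have hgq : ((e : G →* Perm (G ⧸ H)) g) • q₀ = g • q₀ := rfl
      rw [hgq]
      exact (hstab g).mp hg
    · intro hx
      refine ⟨e.symm x, ?_, by exact e.apply_symm_apply x⟩
      apply (hstab _).mpr
      have hgq : ((e : G →* Perm (G ⧸ H)) (e.symm x)) • q₀ = (e.symm x) • q₀ := rfl
      have hgx : (e : G →* Perm (G ⧸ H)) (e.symm x) = x := e.apply_symm_apply x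
      rw [hgx] at hgq
      rw [← hgq]
      exact hx
  have hcard5 : Fintype.card {b : G ⧸ H // b ≠ q₀} = 5 := by
    have := Fintype.card_subtype_compl (fun b : G ⧸ H => b = q₀)
    rw [Fintype.card_subtype_eq, hcard6] at this
    simpa using this
  let e5 : {b : G ⧸ H // b ≠ q₀} ≃ Fin 5 := Fintype.equivFinOfCardEq hcard5
  exact ⟨((e.subgroupMap H).trans (MulEquiv.subgroupCongr hmap)).trans
    ((stabMulEquiv q₀).trans (permMulCongr e5))⟩
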